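/- Let R ⊆ [2] × P with parts R_1, R_2, and let Y_1(R), Y_2(R) be as defined. If max(R_1) ≠ min(R_2), then H̃^p(Y_j(R); k) = 0 for both j = 1, 2 and all p ≤ |max(R_1) ∩ min(R_2)| − 2. If max(R_1) = min(R_2), then H̃^p(Y_j(R); k) ≅ k for p = |max(R_1)| − 2 and H̃^p(Y_j(R); k) = 0 for all p ≠ |max(R_1)| − 2. -/

import Mathlib

/-!
Common infrastructure: abstract simplicial complexes, geometric realization,
homotopy equivalence, reduced simplicial cohomology, squarefree monomial ideals
(encoded as upward closed families of finite sets), Koszul-complex multigraded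
Betti numbers, and letterplace ideals of posets.
-/

noncomputable section

open Finset

attribute [local instance] Classical.propDecidable

universe u v w

/-- An abstract simplicial complex on the vertex type `V`: a collection of
finite subsets of `V` (the faces) closed under taking subsets. -/
structure SComplex (V : Type u) where
  faces : Set (Finset V)
  down_closed : ∀ {F G : Finset V}, F ∈ faces → G ⊆ F → G ∈ faces

namespace SComplex

/-- The geometric realization of a simplicial complex: the subspace of `V → ℝ`
consisting of the convex weight functions supported on a face. -/
def realization {V : Type u} [Fintype V] (X : SComplex V) : Set (V → ℝ) :=
  {f | (∀ v, 0 ≤ f v) ∧ (∑ v, f v) = 1 ∧ ∃ F ∈ X.faces, ∀ v, f v ≠ 0 → v ∈ F}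

/-- Two simplicial complexes are homotopy equivalent if their geometric
realizations are homotopy equivalent topological spaces. -/
def HEquiv {V : Type u} {W : Type v} [Fintype V] [Fintype W]
    (X : SComplex V) (Y : SComplex W) : Prop :=
  Nonempty (ContinuousMap.HomotopyEquiv X.realization Y.realization)

/-- Isomorphism ("equality up to relabeling of vertices") of simplicial
complexes: an order isomorphism between the face posets. -/
def IsIsomorphic {V : Type u} {W : Type v} (X : SComplex V) (Y : SComplex W) : Prop :=
  Nonempty ({F : Finset V // F ∈ X.faces} ≃o {G : Finset W // G ∈ Y.faces})

/-- The induced subcomplex on a subset `S` of the vertex set. -/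
def restrict {V : Type u} (X : SComplex V) (S : Set V) : SComplex V where
  faces := {F | F ∈ X.faces ∧ ∀ v ∈ F, v ∈ S}
  down_closed := by
    intro F G hF hGF
    exact ⟨X.down_closed hF.1 hGF, fun v hv => hF.2 v (hGF hv)⟩

/-- The join of two simplicial complexes (on the disjoint union of the two
vertex types). -/
def join {V : Type u} {W : Type v} (X : SComplex V) (Y : SComplex W) :
    SComplex (V ⊕ W) where
  faces := {F | F.preimage Sum.inl Sum.inl_injective.injOn ∈ X.faces ∧
                F.preimage Sum.inr Sum.inr_injective.injOn ∈ Y.faces}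
  down_closed := by
    intro F G hF hGF
    constructor
    · exact X.down_closed hF.1 fun x hx => by
        simp only [Finset.mem_preimage] at hx ⊢
        exact hGF hx
    · exact Y.down_closed hF.2 fun x hx => by
        simp only [Finset.mem_preimage] at hx ⊢
        exact hGF hx

/-- The join of a finite family of simplicial complexes on pairwise disjoint
vertex types. -/
def bigJoin {ι : Type u} {V : ι → Type v} (X : ∀ i, SComplex (V i)) :
    SComplex (Σ i, V i) where
  faces := {F | ∀ i, F.preimage (Sigma.mk i) sigma_mk_injective.injOn ∈ (X i).faces}
  down_closed := by
    intro F G hF hGF i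
    exact (X i).down_closed (hF i) fun x hx => by
      simp only [Finset.mem_preimage] at hx ⊢
      exact hGF hx

/-- The simplicial complex consisting of two disjoint points. -/
def twoPoint : SComplex Bool where
  faces := {F | F.card ≤ 1}
  down_closed := by
    intro F G hF hGF
    exact le_trans (Finset.card_le_card hGF) hF

/-- The suspension of a simplicial complex: its join with two points. -/
def suspension {V : Type u} (X : SComplex V) : SComplex (V ⊕ Bool) :=
  join X twoPoint

/-- Vertex type of the `m`-fold iterated suspension. -/
def SuspType (V : Type u) : ℕ → Type u
  | 0 => V
  | m + 1 => SuspType V m ⊕ Bool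

/-- The `m`-fold iterated suspension of a simplicial complex. -/
def iterSusp {V : Type u} (X : SComplex V) : (m : ℕ) → SComplex (SuspType V m)
  | 0 => X
  | m + 1 => suspension (iterSusp X m)

end SComplex

/-- Position of `x` with respect to a finite set: the number of elements of `F`
preceding `x` in a fixed well-ordering of the vertex type.  Used for the signs
in (co)chain complexes. -/
def vpos {V : Type u} (F : Finset V) (x : V) : ℕ :=
  (F.filter fun w => WellOrderingRel w x).card

namespace SComplex

variable (k : Type w) [Field k]

/-- The faces of dimension `i` (i.e. of cardinality `i + 1`), `i ∈ ℤ`. -/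
abbrev Face {V : Type u} (X : SComplex V) (i : ℤ) : Type u :=
  {F : Finset V // F ∈ X.faces ∧ (F.card : ℤ) = i + 1}

/-- Reduced simplicial `i`-cochains of `X` with coefficients in `k`
(the empty face in dimension `-1` is included). -/
abbrev cochain {V : Type u} (X : SComplex V) (i : ℤ) : Type (max u w) :=
  Face X i → k

/-- Evaluation of a cochain on an arbitrary finite set (zero if the set is not
a face of the appropriate dimension). -/
def evalC {V : Type u} {X : SComplex V} {i : ℤ} (f : cochain k X i) (F : Finset V) : k :=
  if h : F ∈ X.faces ∧ (F.card : ℤ) = i + 1 then f ⟨F, h⟩ else 0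

theorem evalC_add {V : Type u} {X : SComplex V} {i : ℤ} (f g : cochain k X i)
    (F : Finset V) : evalC k (f + g) F = evalC k f F + evalC k g F := by
  unfold evalC
  split_ifs <;> simp

theorem evalC_smul {V : Type u} {X : SComplex V} {i : ℤ} (s : k) (f : cochain k X i)
    (F : Finset V) : evalC k (s • f) F = s * evalC k f F := by
  unfold evalC
  split_ifs <;> simp

/-- The simplicial coboundary map on reduced cochains. -/
def coboundary {V : Type u} (X : SComplex V) (i : ℤ) :
    cochain k X i →ₗ[k] cochain k X (i + 1) where
  toFun f F := ∑ v ∈ F.1, ((-1 : k) ^ vpos F.1 v) * evalC k f (F.1.erase v)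
  map_add' f g := by
    funext F
    show (∑ v ∈ F.1, ((-1 : k) ^ vpos F.1 v) * evalC k (f + g) (F.1.erase v))
      = (∑ v ∈ F.1, ((-1 : k) ^ vpos F.1 v) * evalC k f (F.1.erase v))
      + (∑ v ∈ F.1, ((-1 : k) ^ vpos F.1 v) * evalC k g (F.1.erase v))
    rw [← Finset.sum_add_distrib]
    exact Finset.sum_congr rfl fun v _ => by rw [evalC_add, mul_add]
  map_smul' s f := by
    funext F
    show (∑ v ∈ F.1, ((-1 : k) ^ vpos F.1 v) * evalC k (s • f) (F.1.erase v))
      = s * ∑ v ∈ F.1, ((-1 : k) ^ vpos F.1 v) * evalC k f (F.1.erase v)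
    rw [Finset.mul_sum]
    exact Finset.sum_congr rfl fun v _ => by rw [evalC_smul]; ring

/-- The dimension of the `i`-th reduced simplicial cohomology of `X` with
coefficients in the field `k` (computed as `dim ker d^i - dim im d^(i-1)`). -/
def redCohomDim {V : Type u} (X : SComplex V) (i : ℤ) : ℕ :=
  Module.finrank k (LinearMap.ker (coboundary k X i)) -
    Module.finrank k (LinearMap.range (coboundary k X (i - 1)))

/-- The generating series `t·H̃(X,t) = ∑_{i ≥ -1} t^{i+1} dim_k H̃^i(X;k)`,
an element of `ℕ⟦t⟧`. -/
def hSeries {V : Type u} (X : SComplex V) : PowerSeries ℕ :=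
  PowerSeries.mk fun m => redCohomDim k X ((m : ℤ) - 1)

end SComplex

/-- A squarefree monomial ideal on the set of variables `W`, encoded by the
upward closed family of the supports of the squarefree monomials belonging
to it. -/
structure SqfIdeal (W : Type u) where
  carrier : Set (Finset W)
  up_closed : ∀ {S T : Finset W}, S ∈ carrier → S ⊆ T → T ∈ carrier

namespace SqfIdeal

/-- The basis of the degree-`R` strand of the Koszul complex `K(x;I)` in
homological degree `i`. -/
abbrev KBasis {W : Type u} (I : SqfIdeal W) (R : Finset W) (i : ℤ) : Type u :=
  {S : Finset W // S ⊆ R ∧ (S.card : ℤ) = i ∧ R \ S ∈ I.carrier}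

/-- The degree-`R` strand of the Koszul complex of `I`, in homological
degree `i`, with coefficients in `k`. -/
abbrev kchain (k : Type w) [Field k] {W : Type u} (I : SqfIdeal W) (R : Finset W)
    (i : ℤ) : Type (max u w) :=
  KBasis I R i → k

variable (k : Type w) [Field k]

/-- Evaluation of a Koszul chain on an arbitrary finite set. -/
def evalK {W : Type u} {I : SqfIdeal W} {R : Finset W} {i : ℤ}
    (f : kchain k I R i) (S : Finset W) : k :=
  if h : S ⊆ R ∧ (S.card : ℤ) = i ∧ R \ S ∈ I.carrier then f ⟨S, h⟩ else 0

theorem evalK_add {W : Type u} {I : SqfIdeal W} {R : Finset W} {i : ℤ}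
    (f g : kchain k I R i) (S : Finset W) :
    evalK k (f + g) S = evalK k f S + evalK k g S := by
  unfold evalK
  split_ifs <;> simp

theorem evalK_smul {W : Type u} {I : SqfIdeal W} {R : Finset W} {i : ℤ}
    (s : k) (f : kchain k I R i) (S : Finset W) :
    evalK k (s • f) S = s * evalK k f S := by
  unfold evalK
  split_ifs <;> simp

/-- The Koszul differential on the degree-`R` strand (as a map of the dual
function spaces). -/
def koszulD {W : Type u} (I : SqfIdeal W) (R : Finset W) (i : ℤ) :
    kchain k I R i →ₗ[k] kchain k I R (i - 1) where
  toFun f S := ∑ v ∈ R \ S.1, ((-1 : k) ^ vpos S.1 v) * evalK k f (insert v S.1)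
  map_add' f g := by
    funext S
    show (∑ v ∈ R \ S.1, ((-1 : k) ^ vpos S.1 v) * evalK k (f + g) (insert v S.1))
      = (∑ v ∈ R \ S.1, ((-1 : k) ^ vpos S.1 v) * evalK k f (insert v S.1))
      + (∑ v ∈ R \ S.1, ((-1 : k) ^ vpos S.1 v) * evalK k g (insert v S.1))
    rw [← Finset.sum_add_distrib]
    exact Finset.sum_congr rfl fun v _ => by rw [evalK_add, mul_add]
  map_smul' s f := by
    funext S
    show (∑ v ∈ R \ S.1, ((-1 : k) ^ vpos S.1 v) * evalK k (s • f) (insert v S.1))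
      = s * ∑ v ∈ R \ S.1, ((-1 : k) ^ vpos S.1 v) * evalK k f (insert v S.1)
    rw [Finset.mul_sum]
    exact Finset.sum_congr rfl fun v _ => by rw [evalK_smul]; ring

end SqfIdeal

/-- The multigraded Betti number `β_{i,R}(I) = dim_k Tor_i(I,k)_R` of a
squarefree monomial ideal in the squarefree multidegree `R`, computed as the
dimension of the `i`-th homology of the degree-`R` strand of the Koszul
complex. -/
def multiBetti (k : Type w) [Field k] {W : Type u} (I : SqfIdeal W) (i : ℤ)
    (R : Finset W) : ℕ :=
  Module.finrank k (LinearMap.ker (SqfIdeal.koszulD k I R i)) -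
    Module.finrank k (LinearMap.range (SqfIdeal.koszulD k I R (i + 1)))

/-- The graded Betti number `β_{i,j}(I) = dim_k Tor_i(I,k)_j` of a squarefree
monomial ideal: the sum of the multigraded Betti numbers over the (squarefree)
multidegrees of cardinality `j`. -/
def gradedBetti (k : Type w) [Field k] {W : Type u} [Fintype W] (I : SqfIdeal W)
    (i : ℤ) (j : ℤ) : ℕ :=
  if 0 ≤ j then
    ∑ R ∈ Finset.powersetCard j.toNat (Finset.univ : Finset W), multiBetti k I i R
  else 0

/-- The `n`-th letterplace ideal `L(n,P)` of a poset `P`: the squarefree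
monomial ideal on the variables `x_{(i,p)}`, `(i,p) ∈ [n] × P`, generated by
the monomials `x_{(1,p₁)} ⋯ x_{(n,pₙ)}` with `p₁ ≤ p₂ ≤ ⋯ ≤ pₙ` in `P`. -/
def letterplace (n : ℕ) (P : Type u) [PartialOrder P] : SqfIdeal (Fin n × P) where
  carrier := {T | ∃ c : Fin n → P, Monotone c ∧ ∀ i, (i, c i) ∈ T}
  up_closed := by
    rintro S T ⟨c, hc, hm⟩ hST
    exact ⟨c, hc, fun i => hST (hm i)⟩

/-- The `i`-th part `R_i ⊆ P` of a multidegree `R ⊆ [n] × P`. -/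
def part {n : ℕ} {P : Type u} (R : Finset (Fin n × P)) (i : Fin n) : Finset P :=
  (R.filter fun q => q.1 = i).image Prod.snd

/-- The set of maximal elements of the induced subposet on `A`. -/
def maxSet {P : Type u} [PartialOrder P] (A : Finset P) : Finset P :=
  A.filter fun a => ∀ b ∈ A, a ≤ b → a = b

/-- The set of minimal elements of the induced subposet on `A`. -/
def minSet {P : Type u} [PartialOrder P] (A : Finset P) : Finset P :=
  A.filter fun a => ∀ b ∈ A, b ≤ a → a = b

/-- The transitive order `A ≤ B` on subsets of a poset: every maximal element
of `A` is below some minimal element of `B`, and every minimal element of `B`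
is above some maximal element of `A`. -/
def subsetLE {P : Type u} [PartialOrder P] (A B : Finset P) : Prop :=
  (∀ a ∈ maxSet A, ∃ b ∈ minSet B, a ≤ b) ∧
  (∀ b ∈ minSet B, ∃ a ∈ maxSet A, a ≤ b)

/-- The independence complex of the bipartite graph on two disjoint copies of
`P`, with left vertex set `A`, right vertex set `B`, and edges the pairs
`(p, q) ∈ A × B` with `p ≤ q` in `P`. -/
def XComplex {P : Type u} [PartialOrder P] (A B : Finset P) : SComplex (P ⊕ P) where
  faces := {F | (∀ x ∈ F, Sum.elim (· ∈ A) (· ∈ B) x) ∧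
                ∀ p q : P, Sum.inl p ∈ F → Sum.inr q ∈ F → ¬ p ≤ q}
  down_closed := by
    intro F G hF hGF
    exact ⟨fun x hx => hF.1 x (hGF hx), fun p q hp hq => hF.2 p q (hGF hp) (hGF hq)⟩

/-- `Y₁`: the simplicial complex on `A` whose faces are the subsets `F ⊆ A`
such that some `b ∈ B` dominates no element of `F`. -/
def Y1Complex {P : Type u} [PartialOrder P] (A B : Finset P) : SComplex P where
  faces := {F | (∀ x ∈ F, x ∈ A) ∧ ∃ b ∈ B, ∀ a ∈ F, ¬ a ≤ b}
  down_closed := by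
    rintro F G ⟨hFA, b, hb, hFb⟩ hGF
    exact ⟨fun x hx => hFA x (hGF hx), b, hb, fun a ha => hFb a (hGF ha)⟩

/-- `Y₂`: the simplicial complex on `B` whose faces are the subsets `F ⊆ B`
such that some `a ∈ A` is dominated by no element of `F`. -/
def Y2Complex {P : Type u} [PartialOrder P] (A B : Finset P) : SComplex P where
  faces := {F | (∀ x ∈ F, x ∈ B) ∧ ∃ a ∈ A, ∀ b ∈ F, ¬ a ≤ b}
  down_closed := by
    rintro F G ⟨hFB, a, ha, hFa⟩ hGF
    exact ⟨fun x hx => hFB x (hGF hx), a, ha, fun b hb => hFa b (hGF hb)⟩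

/-- The restriction `Δ(n,P)|_R` of the Stanley–Reisner complex of the
letterplace ideal `L(n,P)` to the vertex set `R`. -/
def deltaRes (n : ℕ) (P : Type u) [PartialOrder P] (R : Finset (Fin n × P)) :
    SComplex (Fin n × P) where
  faces := {F | F ⊆ R ∧ ¬ ∃ c : Fin n → P, Monotone c ∧ ∀ i, (i, c i) ∈ F}
  down_closed := by
    rintro F G ⟨hFR, hF⟩ hGF
    exact ⟨hGF.trans hFR, fun ⟨c, hc, hm⟩ => hF ⟨c, hc, fun i => hGF (hm i)⟩⟩

/-- `A` is a maximal antichain of the poset `P`. -/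
def IsMaxFinsetAntichain {P : Type u} [PartialOrder P] (A : Finset P) : Prop :=
  IsAntichain (· ≤ ·) (A : Set P) ∧
    ∀ B : Finset P, IsAntichain (· ≤ ·) (B : Set P) → A ⊆ B → A = B

/-- The maximal cardinality of an antichain in the finite poset `P`. -/
def maxAntichainCard (P : Type u) [PartialOrder P] [Fintype P] : ℕ :=
  Finset.sup (Finset.univ.filter fun A : Finset P => IsAntichain (· ≤ ·) (A : Set P))
    Finset.card

/-- The independence complex of a bipartite graph, with parts `A` and `B` and
edge relation `E`. -/
def bipIndep {A : Type u} {B : Type v} (E : A → B → Prop) : SComplex (A ⊕ B) where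
  faces := {F | ∀ a b, Sum.inl a ∈ F → Sum.inr b ∈ F → ¬ E a b}
  down_closed := by
    intro F G hF hGF a b ha hb
    exact hF a b (hGF ha) (hGF hb)

section Aux8
set_option linter.unusedSectionVars false

open SComplex

variable {P : Type u} [Fintype P] {k : Type w} [Field k]

lemma wor_irrefl (x : P) : ¬ WellOrderingRel x x := _root_.irrefl x

lemma wor_total {x y : P} (h : x ≠ y) :
    (WellOrderingRel x y ∧ ¬ WellOrderingRel y x) ∨
    (WellOrderingRel y x ∧ ¬ WellOrderingRel x y) := by
  rcases trichotomous_of WellOrderingRel x y with h1 | h1 | h1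
  · exact Or.inl ⟨h1, fun h2 => wor_irrefl x (_root_.trans h1 h2)⟩
  · exact absurd h1 h
  · exact Or.inr ⟨h1, fun h2 => wor_irrefl x (_root_.trans h2 h1)⟩

lemma vpos_erase (F : Finset P) {v : P} (hv : v ∈ F) (x : P) :
    vpos F x = vpos (F.erase v) x + (if WellOrderingRel v x then 1 else 0) := by
  unfold vpos
  rw [Finset.filter_erase]
  split_ifs with h
  · exact (Finset.card_erase_add_one
      (s := F.filter fun w => WellOrderingRel w x) (Finset.mem_filter.2 ⟨hv, h⟩)).symm
  · rw [Finset.erase_eq_of_notMem, add_zero]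
    intro hmem; exact h (Finset.mem_filter.1 hmem).2

lemma vpos_insert (F : Finset P) {v₀ : P} (hv₀ : v₀ ∉ F) (x : P) :
    vpos (insert v₀ F) x = vpos F x + (if WellOrderingRel v₀ x then 1 else 0) := by
  unfold vpos
  rw [Finset.filter_insert]
  split_ifs with h
  · rw [Finset.card_insert_of_notMem (fun hm => hv₀ (Finset.mem_filter.1 hm).1)]
  · rw [add_zero]

lemma neg_one_sq_pow (m : ℕ) : ((-1:k)^m) * ((-1:k)^m) = 1 := by
  rw [← pow_add]; exact Even.neg_one_pow ⟨m, rfl⟩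

lemma neg_one_pow_flip {E1 E2 c : ℕ} (h : E1 + E2 = 2*c + 1) :
    ((-1:k)^E1) = -((-1:k)^E2) := by
  have h1 : ((-1:k)^(E1+E2)) = -1 := Odd.neg_one_pow ⟨c, by omega⟩
  calc ((-1:k)^E1) = (-1:k)^E1 * ((-1:k)^E2 * (-1:k)^E2) := by
        rw [neg_one_sq_pow, mul_one]
    _ = ((-1:k)^(E1+E2)) * (-1:k)^E2 := by rw [pow_add]; ring
    _ = -((-1:k)^E2) := by rw [h1]; ring

lemma evalC_face {X : SComplex P} {i : ℤ} (f : cochain k X i) (F : Face X i) :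
    evalC k f F.1 = f F := by
  rw [evalC, dif_pos F.2]

def cochainCast (X : SComplex P) {i j : ℤ} (h : i = j) :
    cochain k X i ≃ₗ[k] cochain k X j :=
  h ▸ LinearEquiv.refl k (cochain k X i)

lemma cochainCast_eval {X : SComplex P} {i j : ℤ} (h : i = j) (f : cochain k X i)
    (S : Finset P) : evalC k (cochainCast X h f) S = evalC k f S := by
  subst h; rfl

lemma test_instances (X : SComplex P) (i : ℤ) : Module.Finite k (cochain k X i) := by
  infer_instance

lemma exact_imp_zero (X : SComplex P) (p : ℤ)
    (h : ∀ f : cochain k X p, coboundary k X p f = 0 →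
      ∃ g : cochain k X (p-1), ∀ S : Finset P,
        evalC k (coboundary k X (p-1) g) S = evalC k f S) :
    redCohomDim k X p = 0 := by
  have hcast : p = p - 1 + 1 := by ring
  have hle : Submodule.map (cochainCast (k := k) X hcast).toLinearMap (LinearMap.ker (coboundary k X p)) ≤
      LinearMap.range (coboundary k X (p-1)) := by
    rintro x hx
    obtain ⟨f, hf, rfl⟩ := Submodule.mem_map.1 hx
    obtain ⟨g, hg⟩ := h f (LinearMap.mem_ker.1 hf)
    refine ⟨g, ?_⟩
    funext F
    have h1 : coboundary k X (p-1) g F = evalC k (coboundary k X (p-1) g) F.1 :=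
      (evalC_face (k := k) _ F).symm
    rw [h1, hg F.1, ← cochainCast_eval hcast f F.1]
    exact evalC_face (k := k) _ F
  have h1 : Module.finrank k (LinearMap.ker (coboundary k X p))
      = Module.finrank k
        (Submodule.map (cochainCast (k := k) X hcast).toLinearMap
          (LinearMap.ker (coboundary k X p))) :=
    (LinearEquiv.finrank_map_eq (cochainCast (k := k) X hcast) _).symm
  have h2 := Submodule.finrank_mono hle
  unfold redCohomDim
  omega

lemma zero_of_noface (Y : SComplex P) (p : ℤ)
    (h : ∀ F ∈ Y.faces, (F.card : ℤ) ≠ p + 1) : redCohomDim k Y p = 0 := by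
  have hempty : IsEmpty (Face Y p) := ⟨fun F => h F.1 F.2.1 F.2.2⟩
  have hsub : Subsingleton (cochain k Y p) :=
    ⟨fun a b => funext fun F => (hempty.false F).elim⟩
  have h0 : Module.finrank k (cochain k Y p) = 0 :=
    Module.finrank_zero_of_subsingleton
  have hle := Submodule.finrank_le (LinearMap.ker (coboundary k Y p))
  unfold redCohomDim
  omega

lemma core_exact (Y : SComplex P) (V : Finset P)
    (hYV : ∀ F ∈ Y.faces, ∀ x ∈ F, x ∈ V)
    (p : ℤ) (v₀ : P) (hv₀ : v₀ ∈ V) (f : cochain k Y p)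
    (hf : ∀ S : Finset P, (∀ x ∈ S, x ∈ V) → v₀ ∈ S → (S.card : ℤ) = p + 2 →
      ∑ v ∈ S, ((-1:k) ^ vpos S v) * evalC k f (S.erase v) = 0) :
    ∃ g : cochain k Y (p-1), ∀ S : Finset P,
      evalC k (coboundary k Y (p-1) g) S = evalC k f S := by
  set g : cochain k Y (p-1) := fun F =>
    if v₀ ∈ F.1 then 0
    else ((-1:k) ^ vpos F.1 v₀) * evalC k f (insert v₀ F.1) with hgdef
  refine ⟨g, ?_⟩
  intro S
  by_cases hS : S ∈ Y.faces ∧ (S.card : ℤ) = p + 1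
  · obtain ⟨hSface, hScard⟩ := hS
    have hcond1 : S ∈ Y.faces ∧ (S.card : ℤ) = p - 1 + 1 + 1 := ⟨hSface, by omega⟩
    rw [evalC, evalC, dif_pos hcond1, dif_pos ⟨hSface, hScard⟩]
    show (∑ v ∈ S, ((-1:k) ^ vpos S v) * evalC k g (S.erase v))
        = f ⟨S, hSface, hScard⟩
    have hgeval : ∀ v ∈ S, evalC k g (S.erase v) =
        if v₀ ∈ S.erase v then 0
        else ((-1:k) ^ vpos (S.erase v) v₀) * evalC k f (insert v₀ (S.erase v)) := by
      intro v hv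
      have hface : S.erase v ∈ Y.faces := Y.down_closed hSface (Finset.erase_subset _ _)
      have h1 : 1 ≤ S.card := Finset.card_pos.2 ⟨v, hv⟩
      have hcard : ((S.erase v).card : ℤ) = p - 1 + 1 := by
        rw [Finset.card_erase_of_mem hv, Nat.cast_sub h1]; omega
      rw [evalC, dif_pos ⟨hface, hcard⟩]
    by_cases hv₀S : v₀ ∈ S
    · rw [Finset.sum_eq_single v₀ ?_ ?_]
      · rw [hgeval v₀ hv₀S, if_neg (Finset.notMem_erase _ _),
          Finset.insert_erase hv₀S]
        have hm : vpos (S.erase v₀) v₀ = vpos S v₀ := by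
          rw [vpos_erase S hv₀S v₀, if_neg (wor_irrefl v₀), add_zero]
        rw [hm, ← mul_assoc, neg_one_sq_pow, one_mul, evalC, dif_pos ⟨hSface, hScard⟩]
      · intro b hb hbne
        rw [hgeval b hb, if_pos (Finset.mem_erase.2 ⟨Ne.symm hbne, hv₀S⟩), mul_zero]
      · intro habs; exact absurd hv₀S habs
    · have hSV : ∀ x ∈ S, x ∈ V := hYV S hSface
      have hins : ∀ x ∈ insert v₀ S, x ∈ V := by
        intro x hx
        rcases Finset.mem_insert.1 hx with rfl | hx
        · exact hv₀
        · exact hSV x hx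
      have hcardins : ((insert v₀ S).card : ℤ) = p + 2 := by
        rw [Finset.card_insert_of_notMem hv₀S]; push_cast; omega
      have hsum := hf (insert v₀ S) hins (Finset.mem_insert_self _ _) hcardins
      rw [Finset.sum_insert hv₀S, Finset.erase_insert hv₀S] at hsum
      have hm : vpos (insert v₀ S) v₀ = vpos S v₀ := by
        rw [vpos_insert S hv₀S v₀, if_neg (wor_irrefl v₀), add_zero]
      rw [hm] at hsum
      have hterm : ∀ v ∈ S, ((-1:k) ^ vpos S v) * evalC k g (S.erase v)
          = -(((-1:k) ^ vpos S v₀) * (((-1:k) ^ vpos (insert v₀ S) v)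
              * evalC k f ((insert v₀ S).erase v))) := by
        intro v hv
        have hv₀v : v₀ ≠ v := fun h => hv₀S (h ▸ hv)
        rw [hgeval v hv, if_neg (fun hmem => hv₀S (Finset.mem_of_mem_erase hmem))]
        have hset : (insert v₀ S).erase v = insert v₀ (S.erase v) :=
          Finset.erase_insert_of_ne hv₀v
        have h1 := vpos_erase S hv v₀
        have h2 := vpos_insert S hv₀S v
        have hE : vpos S v + vpos (S.erase v) v₀
            + (vpos S v₀ + vpos (insert v₀ S) v)
            = 2*(vpos S v + vpos (S.erase v) v₀) + 1 := by
          rcases wor_total hv₀v with ⟨ha, hb⟩ | ⟨ha, hb⟩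
          · rw [if_pos ha] at h2; rw [if_neg hb] at h1; omega
          · rw [if_pos ha] at h1; rw [if_neg hb] at h2; omega
        have hflip := neg_one_pow_flip (k := k) hE
        rw [hset]
        calc ((-1:k) ^ vpos S v) * (((-1:k) ^ vpos (S.erase v) v₀)
              * evalC k f (insert v₀ (S.erase v)))
            = ((-1:k) ^ (vpos S v + vpos (S.erase v) v₀))
              * evalC k f (insert v₀ (S.erase v)) := by rw [pow_add]; ring
          _ = -((-1:k) ^ (vpos S v₀ + vpos (insert v₀ S) v))
              * evalC k f (insert v₀ (S.erase v)) := by rw [hflip]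
          _ = -(((-1:k) ^ vpos S v₀) * (((-1:k) ^ vpos (insert v₀ S) v)
              * evalC k f (insert v₀ (S.erase v)))) := by rw [pow_add]; ring
      rw [Finset.sum_congr rfl hterm]
      have hfS : evalC k f S = f ⟨S, hSface, hScard⟩ := by
        rw [evalC, dif_pos ⟨hSface, hScard⟩]
      rw [← hfS]
      have hsq := neg_one_sq_pow (k := k) (vpos S v₀)
      rw [Finset.sum_neg_distrib, ← Finset.mul_sum]
      linear_combination (-((-1:k) ^ vpos S v₀)) * hsum + (evalC k f S) * hsq
  · have hcond1 : ¬ (S ∈ Y.faces ∧ (S.card : ℤ) = p - 1 + 1 + 1) := by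
      intro h'; exact hS ⟨h'.1, by omega⟩
    rw [evalC, evalC, dif_neg hcond1, dif_neg hS]

lemma lemA (Y : SComplex P) (V : Finset P)
    (hYV : ∀ F ∈ Y.faces, ∀ x ∈ F, x ∈ V)
    (p : ℤ) (v₀ : P) (hv₀ : v₀ ∈ V)
    (hS : ∀ S : Finset P, (∀ x ∈ S, x ∈ V) → v₀ ∈ S → (S.card : ℤ) = p + 2 →
      S ∈ Y.faces) :
    redCohomDim k Y p = 0 := by
  apply exact_imp_zero
  intro f hdf
  apply core_exact Y V hYV p v₀ hv₀ f
  intro S hSV hvS hcard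
  have hface := hS S hSV hvS hcard
  have hc2 : (S.card : ℤ) = p + 1 + 1 := by omega
  calc (∑ v ∈ S, ((-1:k) ^ vpos S v) * evalC k f (S.erase v))
      = coboundary k Y p f ⟨S, hface, hc2⟩ := rfl
    _ = 0 := by rw [hdf]; rfl

lemma phi_d_zero (Y : SComplex P) (A : Finset P)
    (hAface : ∀ v ∈ A, A.erase v ∈ Y.faces) {p : ℤ} (hp : p = (A.card : ℤ) - 2)
    (hn : 1 ≤ A.card) (g : cochain k Y (p-1)) :
    ∑ v ∈ A, ((-1:k) ^ vpos A v)
      * evalC k (coboundary k Y (p-1) g) (A.erase v) = 0 := by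
  have hcastE : ∀ v ∈ A, ((A.erase v).card : ℤ) = p - 1 + 1 + 1 := by
    intro v hv; rw [Finset.card_erase_of_mem hv, Nat.cast_sub hn]; omega
  have hexp : ∀ v ∈ A, evalC k (coboundary k Y (p-1) g) (A.erase v)
      = ∑ w ∈ A.erase v, ((-1:k) ^ vpos (A.erase v) w)
          * evalC k g ((A.erase v).erase w) := by
    intro v hv
    rw [evalC, dif_pos ⟨hAface v hv, hcastE v hv⟩]
    rfl
  set T : P × P → k := fun q =>
    ((-1:k) ^ (vpos A q.1 + vpos (A.erase q.1) q.2))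
      * evalC k g ((A.erase q.1).erase q.2) with hT
  have hdiag : ∀ v ∈ A, T (v, v) = 0 := by
    intro v hv
    have hz : evalC k g ((A.erase v).erase v) = 0 := by
      rw [Finset.erase_idem, evalC, dif_neg]
      intro h
      have hc := h.2
      have hc2 : ((A.erase v).card : ℤ) = (A.card : ℤ) - 1 := by
        rw [Finset.card_erase_of_mem hv]; omega
      omega
    show ((-1:k) ^ (vpos A v + vpos (A.erase v) v))
      * evalC k g ((A.erase v).erase v) = 0
    rw [hz, mul_zero]
  calc (∑ v ∈ A, ((-1:k) ^ vpos A v)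
        * evalC k (coboundary k Y (p-1) g) (A.erase v))
      = ∑ v ∈ A, ∑ w ∈ A.erase v, T (v, w) := by
        refine Finset.sum_congr rfl fun v hv => ?_
        rw [hexp v hv, Finset.mul_sum]
        refine Finset.sum_congr rfl fun w _ => ?_
        show _ = ((-1:k) ^ (vpos A v + vpos (A.erase v) w))
          * evalC k g ((A.erase v).erase w)
        rw [pow_add]; ring
    _ = ∑ v ∈ A, ∑ w ∈ A, T (v, w) := by
        refine Finset.sum_congr rfl fun v hv => ?_
        exact Finset.sum_erase A (hdiag v hv)
    _ = ∑ q ∈ A ×ˢ A, T q := (Finset.sum_product _ _ _).symm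
    _ = 0 := by
        refine Finset.sum_involution (fun q _ => (q.2, q.1)) ?_ ?_ ?_ ?_
        · rintro ⟨a, b⟩ hq
          obtain ⟨hq1, hq2⟩ := Finset.mem_product.1 hq
          replace hq1 : a ∈ A := hq1
          replace hq2 : b ∈ A := hq2
          by_cases hd : a = b
          · subst hd
            rw [hdiag a hq1, add_zero]
          · have h1 := vpos_erase A hq1 b
            have h2 := vpos_erase A hq2 a
            have hE : (vpos A a + vpos (A.erase a) b)
                + (vpos A b + vpos (A.erase b) a)
                = 2*(vpos (A.erase a) b + vpos (A.erase b) a) + 1 := by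
              rcases wor_total hd with ⟨ha, hb⟩ | ⟨ha, hb⟩
              · rw [if_pos ha] at h1; rw [if_neg hb] at h2; omega
              · rw [if_pos ha] at h2; rw [if_neg hb] at h1; omega
            have hflip := neg_one_pow_flip (k := k) hE
            show ((-1:k) ^ (vpos A a + vpos (A.erase a) b))
                * evalC k g ((A.erase a).erase b)
              + ((-1:k) ^ (vpos A b + vpos (A.erase b) a))
                * evalC k g ((A.erase b).erase a) = 0
            rw [Finset.erase_right_comm (s := A) (a := b) (b := a), hflip]
            ring
        · rintro ⟨a, b⟩ hq hTq heq
          have hd : b = a := congrArg Prod.fst heq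
          subst hd
          exact hTq (hdiag b (Finset.mem_product.1 hq).1)
        · intro q hq
          obtain ⟨hq1, hq2⟩ := Finset.mem_product.1 hq
          exact Finset.mem_product.2 ⟨hq2, hq1⟩
        · intro q hq; rfl

lemma keyBd_top (Y : SComplex P) (A : Finset P) (hA : A.Nonempty)
    (hfaces : Y.faces = {F : Finset P | (∀ x ∈ F, x ∈ A) ∧ ¬ A ⊆ F}) :
    redCohomDim k Y ((A.card : ℤ) - 2) = 1 := by
  have hn1 : 1 ≤ A.card := Finset.card_pos.2 hA
  set p : ℤ := (A.card : ℤ) - 2 with hp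
  have hAface : ∀ v ∈ A, A.erase v ∈ Y.faces := by
    intro v hv; rw [hfaces]
    exact ⟨fun x hx => Finset.mem_of_mem_erase hx,
      fun hsub => Finset.notMem_erase v A (hsub hv)⟩
  have hAcardE : ∀ v ∈ A, ((A.erase v).card : ℤ) = p + 1 := by
    intro v hv; rw [Finset.card_erase_of_mem hv]; omega
  have hYV : ∀ F ∈ Y.faces, ∀ x ∈ F, x ∈ A := by
    intro F hF; rw [hfaces] at hF; exact hF.1
  -- kernel of top coboundary is everything
  have hempty : IsEmpty (Face Y (p+1)) := by
    constructor; rintro ⟨F, hFf, hFc⟩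
    have hFf' := hFf; rw [hfaces] at hFf'
    have hsub : F ⊆ A := fun x hx => hFf'.1 x hx
    have hFA : F = A := Finset.eq_of_subset_of_card_le hsub (by omega)
    exact hFf'.2 (by rw [hFA])
  have hd0 : coboundary k Y p = 0 := by
    apply LinearMap.ext; intro f; funext F; exact (hempty.false F).elim
  have hker : LinearMap.ker (coboundary k Y p) = ⊤ := LinearMap.ker_eq_top.2 hd0
  -- cardinality of p-faces
  have hcardFace : Fintype.card (Face Y p) = A.card := by
    have e : {v : P // v ∈ A} ≃ Face Y p := by
      refine Equiv.ofBijective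
        (fun v => ⟨A.erase v.1, hAface v.1 v.2, hAcardE v.1 v.2⟩) ⟨?_, ?_⟩
      · rintro ⟨v, hv⟩ ⟨w, hw⟩ h
        have h' : A.erase v = A.erase w := congrArg Subtype.val h
        by_contra hne
        have hne' : v ≠ w := fun hh => hne (Subtype.ext hh)
        have hmem : v ∈ A.erase w := Finset.mem_erase.2 ⟨hne', hv⟩
        rw [← h'] at hmem
        exact Finset.notMem_erase v A hmem
      · rintro ⟨F, hFf, hFc⟩
        have hFf' := hFf; rw [hfaces] at hFf'
        obtain ⟨v, hvA, hvF⟩ := Finset.not_subset.1 hFf'.2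
        refine ⟨⟨v, hvA⟩, ?_⟩
        apply Subtype.ext
        show A.erase v = F
        have hsub : F ⊆ A.erase v := fun x hx =>
          Finset.mem_erase.2 ⟨fun hh => hvF (hh ▸ hx), hFf'.1 x hx⟩
        have h1 := hAcardE v hvA
        exact (Finset.eq_of_subset_of_card_le hsub (by omega)).symm
    rw [← Fintype.card_congr e, Fintype.card_coe]
  have hrankC : Module.finrank k (cochain k Y p) = A.card := by
    rw [Module.finrank_fintype_fun_eq_card, hcardFace]
  obtain ⟨v₁, hv₁⟩ := hA
  -- the linear functional φ
  set φ : cochain k Y p →ₗ[k] k := {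
    toFun := fun f => ∑ v ∈ A, ((-1:k) ^ vpos A v) * evalC k f (A.erase v)
    map_add' := fun f g => by
      show (∑ v ∈ A, ((-1:k) ^ vpos A v) * evalC k (f + g) (A.erase v))
        = (∑ v ∈ A, ((-1:k) ^ vpos A v) * evalC k f (A.erase v))
        + (∑ v ∈ A, ((-1:k) ^ vpos A v) * evalC k g (A.erase v))
      rw [← Finset.sum_add_distrib]
      exact Finset.sum_congr rfl fun v _ => by rw [evalC_add]; ring
    map_smul' := fun s f => by
      show (∑ v ∈ A, ((-1:k) ^ vpos A v) * evalC k (s • f) (A.erase v))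
        = s • ∑ v ∈ A, ((-1:k) ^ vpos A v) * evalC k f (A.erase v)
      rw [smul_eq_mul, Finset.mul_sum]
      exact Finset.sum_congr rfl fun v _ => by rw [evalC_smul]; ring } with hφdef
  have hφeval : ∀ f : cochain k Y p,
      φ f = ∑ v ∈ A, ((-1:k) ^ vpos A v) * evalC k f (A.erase v) := fun f => rfl
  -- φ is surjective
  set f₀ : cochain k Y p := fun F =>
    if F.1 = A.erase v₁ then ((-1:k) ^ vpos A v₁) else 0 with hf₀def
  have hφf₀ : φ f₀ = 1 := by
    rw [hφeval, Finset.sum_eq_single v₁ ?_ ?_]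
    · rw [evalC, dif_pos ⟨hAface v₁ hv₁, hAcardE v₁ hv₁⟩]
      show ((-1:k) ^ vpos A v₁)
        * (if A.erase v₁ = A.erase v₁ then ((-1:k) ^ vpos A v₁) else 0) = 1
      rw [if_pos rfl]; exact neg_one_sq_pow _
    · intro b hb hbne
      rw [evalC, dif_pos ⟨hAface b hb, hAcardE b hb⟩]
      show ((-1:k) ^ vpos A b)
        * (if A.erase b = A.erase v₁ then ((-1:k) ^ vpos A v₁) else 0) = 0
      rw [if_neg, mul_zero]
      intro heq
      apply hbne
      by_contra hne
      have hmem : b ∈ A.erase v₁ := Finset.mem_erase.2 ⟨hne, hb⟩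
      rw [← heq] at hmem
      exact Finset.notMem_erase b A hmem
    · intro h; exact absurd hv₁ h
  have hsurj : Function.Surjective φ := by
    intro c
    exact ⟨c • f₀, by rw [map_smul, hφf₀, smul_eq_mul, mul_one]⟩
  have hrangeφ : LinearMap.range φ = ⊤ := LinearMap.range_eq_top.2 hsurj
  have hkerφ : Module.finrank k (LinearMap.ker φ) = A.card - 1 := by
    have h1 := LinearMap.finrank_range_add_finrank_ker φ
    rw [hrangeφ, finrank_top, Module.finrank_self, hrankC] at h1
    omega
  -- identify the range of the lower coboundary with ker φ
  have hcast : p - 1 + 1 = p := by ring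
  have hmapeq : Submodule.map (cochainCast (k := k) Y hcast).toLinearMap
      (LinearMap.range (coboundary k Y (p-1))) = LinearMap.ker φ := by
    apply le_antisymm
    · rintro x hx
      obtain ⟨y, hy, rfl⟩ := Submodule.mem_map.1 hx
      obtain ⟨g, rfl⟩ := LinearMap.mem_range.1 hy
      rw [LinearMap.mem_ker]
      simp only [LinearEquiv.coe_coe]
      rw [hφeval]
      rw [Finset.sum_congr rfl (fun v _ => by
        rw [cochainCast_eval hcast (coboundary k Y (p-1) g) (A.erase v)])]
      exact phi_d_zero Y A hAface hp hn1 g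
    · intro f hf
      have hφf : ∑ v ∈ A, ((-1:k) ^ vpos A v) * evalC k f (A.erase v) = 0 := by
        rw [← hφeval]; exact LinearMap.mem_ker.1 hf
      obtain ⟨g, hg⟩ := core_exact Y A hYV p v₁ hv₁ f (by
        intro S hSV hvS hcard
        have hsub : S ⊆ A := fun x hx => hSV x hx
        have hSA : S = A := Finset.eq_of_subset_of_card_le hsub (by omega)
        rw [hSA]; exact hφf)
      refine Submodule.mem_map.2 ⟨coboundary k Y (p-1) g, LinearMap.mem_range.2 ⟨g, rfl⟩, ?_⟩
      show (cochainCast (k := k) Y hcast).toLinearMap (coboundary k Y (p-1) g) = f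
      simp only [LinearEquiv.coe_toLinearMap]
      funext F
      have h1 : (cochainCast (k := k) Y hcast) (coboundary k Y (p-1) g) F
          = evalC k ((cochainCast (k := k) Y hcast) (coboundary k Y (p-1) g)) F.1 :=
        (evalC_face (k := k) _ F).symm
      rw [h1, cochainCast_eval hcast, hg F.1]
      exact evalC_face (k := k) f F
  have hrangeD : Module.finrank k (LinearMap.range (coboundary k Y (p-1)))
      = A.card - 1 := by
    rw [← LinearEquiv.finrank_map_eq (cochainCast (k := k) Y hcast)
      (LinearMap.range (coboundary k Y (p-1))), hmapeq, hkerφ]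
  have hkerD : Module.finrank k (LinearMap.ker (coboundary k Y p)) = A.card := by
    rw [hker, finrank_top, hrankC]
  unfold redCohomDim
  rw [hkerD, hrangeD]
  omega

lemma keyBd_zero (Y : SComplex P) (A : Finset P) (hA : A.Nonempty)
    (hfaces : Y.faces = {F : Finset P | (∀ x ∈ F, x ∈ A) ∧ ¬ A ⊆ F})
    (p : ℤ) (hp : p ≠ (A.card : ℤ) - 2) : redCohomDim k Y p = 0 := by
  by_cases hlow : p ≤ (A.card : ℤ) - 3
  · obtain ⟨v₁, hv₁⟩ := hA
    apply lemA Y A (fun F hF => by rw [hfaces] at hF; exact hF.1) p v₁ hv₁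
    intro S hSV hvS hcard
    rw [hfaces]
    refine ⟨hSV, fun hsub => ?_⟩
    have := Finset.card_le_card hsub
    omega
  · apply zero_of_noface
    intro F hF
    rw [hfaces] at hF
    have hFsub : F ⊆ A := fun x hx => hF.1 x hx
    have hne : F ≠ A := fun h => hF.2 (by rw [h])
    have hlt : F.card < A.card :=
      Finset.card_lt_card (Finset.ssubset_iff_subset_ne.2 ⟨hFsub, hne⟩)
    omega

lemma keyNe (Y : SComplex P) (V W : Finset P) (r : P → P → Prop)
    (hfaces : Y.faces =
      {F : Finset P | (∀ x ∈ F, x ∈ V) ∧ ∃ w ∈ W, ∀ v ∈ F, ¬ r w v})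
    (hV : ∀ a ∈ V, ∀ b ∈ V, r a b → a = b)
    (hW : ∀ a ∈ W, ∀ b ∈ W, r a b → a = b)
    (hne : W ≠ V) (p : ℤ) (hp : p ≤ ((W ∩ V).card : ℤ) - 2) :
    redCohomDim k Y p = 0 := by
  have hYV : ∀ F ∈ Y.faces, ∀ x ∈ F, x ∈ V := fun F hF => by
    rw [hfaces] at hF; exact hF.1
  by_cases hplow : p ≤ -2
  · apply zero_of_noface
    intro F hF
    omega
  · have hc1 : 1 ≤ (W ∩ V).card := by omega
    by_cases hfull : ∃ w ∈ W, ∀ v ∈ V, ¬ r w v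
    · obtain ⟨w₀, hw₀, hw₀V⟩ := hfull
      obtain ⟨v₁, hv₁WV⟩ : (W ∩ V).Nonempty := Finset.card_pos.1 hc1
      have hv₁ : v₁ ∈ V := (Finset.mem_inter.1 hv₁WV).2
      apply lemA Y V hYV p v₁ hv₁
      intro S hSV hvS hcard
      rw [hfaces]
      exact ⟨hSV, w₀, hw₀, fun v hv => hw₀V v (hSV v hv)⟩
    · push_neg at hfull
      have hb₀ : ∃ b₀ ∈ V, b₀ ∉ W := by
        by_contra hVW
        push_neg at hVW
        have hWV : ∃ a ∈ W, a ∉ V := by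
          by_contra hWV'
          push_neg at hWV'
          exact hne (Finset.Subset.antisymm (fun x hx => hWV' x hx)
            (fun x hx => hVW x hx))
        obtain ⟨a, haW, haV⟩ := hWV
        obtain ⟨v, hvV, hrav⟩ := hfull a haW
        exact haV (by rw [hW a haW v (hVW v hvV) hrav]; exact hvV)
      obtain ⟨b₀, hb₀V, hb₀W⟩ := hb₀
      apply lemA Y V hYV p b₀ hb₀V
      intro S hSV hvS hcard
      rw [hfaces]
      refine ⟨hSV, ?_⟩
      have hex : ∃ a ∈ W ∩ V, a ∉ S := by
        by_contra hsub'
        push_neg at hsub'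
        have hins : insert b₀ (W ∩ V) ⊆ S :=
          Finset.insert_subset hvS (fun x hx => hsub' x hx)
        have hcardins := Finset.card_le_card hins
        rw [Finset.card_insert_of_notMem
          (fun hx => hb₀W (Finset.mem_inter.1 hx).1)] at hcardins
        omega
      obtain ⟨a, haWV, haS⟩ := hex
      obtain ⟨haW, haV⟩ := Finset.mem_inter.1 haWV
      exact ⟨a, haW, fun v hv hr =>
        haS (by rw [hV a haV v (hSV v hv) hr]; exact hv)⟩

variable {Q : Type u} [PartialOrder Q]

lemma mem_maxSet' {S : Finset Q} {a : Q} :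
    a ∈ maxSet S ↔ a ∈ S ∧ ∀ b ∈ S, a ≤ b → a = b := by
  unfold maxSet; exact Finset.mem_filter

lemma mem_minSet' {S : Finset Q} {a : Q} :
    a ∈ minSet S ↔ a ∈ S ∧ ∀ b ∈ S, b ≤ a → a = b := by
  unfold minSet; exact Finset.mem_filter

lemma maxSet_antichain {S : Finset Q} :
    ∀ a ∈ maxSet S, ∀ b ∈ maxSet S, a ≤ b → a = b := by
  intro a ha b hb hab
  exact (mem_maxSet'.1 ha).2 b (mem_maxSet'.1 hb).1 hab

lemma minSet_antichain {S : Finset Q} :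
    ∀ a ∈ minSet S, ∀ b ∈ minSet S, a ≤ b → a = b := by
  intro a ha b hb hab
  exact ((mem_minSet'.1 hb).2 a (mem_minSet'.1 ha).1 hab).symm

lemma maxSet_nonempty {S : Finset Q} (h : S.Nonempty) : (maxSet S).Nonempty := by
  obtain ⟨m, hm, hmax⟩ := S.exists_maximal h
  exact ⟨m, mem_maxSet'.2 ⟨hm, fun b hb hle =>
    le_antisymm hle (hmax hb hle)⟩⟩

lemma minSet_nonempty {S : Finset Q} (h : S.Nonempty) : (minSet S).Nonempty := by
  obtain ⟨m, hm, hmin⟩ := S.exists_minimal h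
  exact ⟨m, mem_minSet'.2 ⟨hm, fun b hb hle =>
    le_antisymm (hmin hb hle) hle⟩⟩

lemma Y1_faces_bd (A : Finset Q) (hanti : ∀ a ∈ A, ∀ b ∈ A, a ≤ b → a = b) :
    (Y1Complex A A).faces = {F : Finset Q | (∀ x ∈ F, x ∈ A) ∧ ¬ A ⊆ F} := by
  ext F
  constructor
  · rintro ⟨h1, b, hbA, h2⟩
    exact ⟨h1, fun hsub => h2 b (hsub hbA) le_rfl⟩
  · rintro ⟨h1, hnsub⟩
    obtain ⟨b, hbA, hbF⟩ := Finset.not_subset.1 hnsub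
    exact ⟨h1, b, hbA, fun a haF hle =>
      hbF (by rw [← hanti a (h1 a haF) b hbA hle]; exact haF)⟩

lemma Y2_faces_bd (A : Finset Q) (hanti : ∀ a ∈ A, ∀ b ∈ A, a ≤ b → a = b) :
    (Y2Complex A A).faces = {F : Finset Q | (∀ x ∈ F, x ∈ A) ∧ ¬ A ⊆ F} := by
  ext F
  constructor
  · rintro ⟨h1, a, haA, h2⟩
    exact ⟨h1, fun hsub => h2 a (hsub haA) le_rfl⟩
  · rintro ⟨h1, hnsub⟩
    obtain ⟨a, haA, haF⟩ := Finset.not_subset.1 hnsub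
    exact ⟨h1, a, haA, fun b hbF hle =>
      haF (by rw [hanti a haA b (h1 b hbF) hle]; exact hbF)⟩

end Aux8
/-- Let `R ⊆ [2] × P` (nonempty) with parts `R₁, R₂`.  If
`max(R₁) ≠ min(R₂)` then `H̃^p(Yⱼ(R);k) = 0` for `j = 1,2` and all
`p ≤ |max(R₁) ∩ min(R₂)| - 2`.  If `max(R₁) = min(R₂)` then
`H̃^p(Yⱼ(R);k) ≅ k` for `p = |max(R₁)| - 2`, and `H̃^p(Yⱼ(R);k) = 0` for all
`p ≠ |max(R₁)| - 2`. -/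
theorem statement_8 {P : Type u} [PartialOrder P] [Fintype P] (k : Type w)
    [Field k] (R : Finset (Fin 2 × P)) (hR : R.Nonempty) :
    (maxSet (part R 0) ≠ minSet (part R 1) →
      ∀ p : ℤ, p ≤ ((maxSet (part R 0) ∩ minSet (part R 1)).card : ℤ) - 2 →
        SComplex.redCohomDim k
          (Y1Complex (maxSet (part R 0)) (minSet (part R 1))) p = 0 ∧
        SComplex.redCohomDim k
          (Y2Complex (maxSet (part R 0)) (minSet (part R 1))) p = 0) ∧
    (maxSet (part R 0) = minSet (part R 1) →
      ∀ p : ℤ,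
        (p = ((maxSet (part R 0)).card : ℤ) - 2 →
          SComplex.redCohomDim k
            (Y1Complex (maxSet (part R 0)) (minSet (part R 1))) p = 1 ∧
          SComplex.redCohomDim k
            (Y2Complex (maxSet (part R 0)) (minSet (part R 1))) p = 1) ∧
        (p ≠ ((maxSet (part R 0)).card : ℤ) - 2 →
          SComplex.redCohomDim k
            (Y1Complex (maxSet (part R 0)) (minSet (part R 1))) p = 0 ∧
          SComplex.redCohomDim k
            (Y2Complex (maxSet (part R 0)) (minSet (part R 1))) p = 0)) := by
  classical
  set A := maxSet (part R 0) with hAdef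
  set B := minSet (part R 1) with hBdef
  constructor
  · intro hAB p hp
    constructor
    · exact keyNe (Y1Complex A B) A B (fun w v => v ≤ w) rfl
        (fun a ha b hb hr => (maxSet_antichain b hb a ha hr).symm)
        (fun a ha b hb hr => (minSet_antichain b hb a ha hr).symm)
        (Ne.symm hAB) p (by rw [Finset.inter_comm]; exact hp)
    · exact keyNe (Y2Complex A B) B A (fun w v => w ≤ v) rfl
        (fun a ha b hb hr => minSet_antichain a ha b hb hr)
        (fun a ha b hb hr => maxSet_antichain a ha b hb hr)
        hAB p hp
  · intro hAB p
    have hanti : ∀ a ∈ A, ∀ b ∈ A, a ≤ b → a = b := maxSet_antichain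
    have hAne : A.Nonempty := by
      obtain ⟨⟨i, q⟩, hq⟩ := hR
      have hmem : q ∈ part R i :=
        Finset.mem_image.2 ⟨(i, q), Finset.mem_filter.2 ⟨hq, rfl⟩, rfl⟩
      by_cases hi : i = 0
      · exact maxSet_nonempty ⟨q, by rw [← hi]; exact hmem⟩
      · have hv : i.val = 1 := by
          have h2 := i.isLt
          have h0 : i.val ≠ 0 := fun h => hi (Fin.ext h)
          omega
        have hi1 : i = 1 := Fin.ext hv
        rw [hAB]
        exact minSet_nonempty ⟨q, by rw [← hi1]; exact hmem⟩
    have hf1 : (Y1Complex A B).faces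
        = {F : Finset P | (∀ x ∈ F, x ∈ A) ∧ ¬ A ⊆ F} := by
      rw [← hAB]; exact Y1_faces_bd A hanti
    have hf2 : (Y2Complex A B).faces
        = {F : Finset P | (∀ x ∈ F, x ∈ A) ∧ ¬ A ⊆ F} := by
      rw [← hAB]; exact Y2_faces_bd A hanti
    constructor
    · intro hpeq
      subst hpeq
      exact ⟨keyBd_top _ A hAne hf1, keyBd_top _ A hAne hf2⟩
    · intro hpne
      exact ⟨keyBd_zero _ A hAne hf1 p hpne, keyBd_zero _ A hAne hf2 p hpne⟩

end
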